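/- Let G be a commutative topological group, let n, s ≥ 1, and let {h_{i,j}} (1 ≤ i ≤ n, 1 ≤ j ≤ s) be elements of G such that for every (i_1, …, i_s) ∈ {1, …, n}^s the set {h_{i_1,1}, …, h_{i_s,s}} topologically generates G. Suppose f : G → ℂ is continuous and there exist exponential polynomials P_1, …, P_s : G → ℂ such that Δ_{h_{n,k}} ⋯ Δ_{h_{2,k}} Δ_{h_{1,k}} f = P_k for every k = 1, …, s. Then f is an exponential polynomial, i.e. span{τ_h f : h ∈ G} is finite-dimensional over ℂ. -/

import Mathlib

noncomputable section

/-- Forward difference operator: `Δ_h f x = f (x + h) - f x`. -/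
def fwdDiffOp {G M : Type*} [AddCommGroup G] [AddCommGroup M] (h : G) (f : G → M) : G → M :=
  fun x => f (x + h) - f x

/-- Mixed differences along a list of steps; the head of the list is applied outermost,
so `mixedDiff [g_m, …, g_1] f = Δ_{g_m} ⋯ Δ_{g_1} f`. -/
def mixedDiff {G M : Type*} [AddCommGroup G] [AddCommGroup M] : List G → (G → M) → (G → M)
  | [], f => f
  | h :: t, f => fwdDiffOp h (mixedDiff t f)

/-- Translation operator: `τ_h f x = f (x + h)`. -/
def transOp {G M : Type*} [AddCommGroup G] (h : G) (f : G → M) : G → M :=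
  fun x => f (x + h)

/-- The span of all translates of `g`. -/
def tauSpan {G : Type*} [AddCommGroup G] (g : G → ℂ) : Submodule ℂ (G → ℂ) :=
  Submodule.span ℂ (Set.range fun h : G => transOp h g)

/-- `f` is an exponential polynomial iff the span of its translates is finite dimensional. -/
def IsExpPoly {G : Type*} [AddCommGroup G] (f : G → ℂ) : Prop :=
  FiniteDimensional ℂ (tauSpan f)

namespace MontelAux

variable {G : Type*} [AddCommGroup G]

/-- Translation as a linear map. -/
def transLM (a : G) : (G → ℂ) →ₗ[ℂ] (G → ℂ) where
  toFun := transOp a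
  map_add' _ _ := rfl
  map_smul' _ _ := rfl

@[simp] lemma transLM_apply (a : G) (u : G → ℂ) : transLM a u = transOp a u := rfl

lemma transOp_zero (u : G → ℂ) : transOp (0 : G) u = u := by
  funext x; simp [transOp]

lemma transOp_transOp (a b : G) (u : G → ℂ) :
    transOp a (transOp b u) = transOp (b + a) u := by
  funext x
  show u (x + a + b) = u (x + (b + a))
  rw [add_assoc, add_comm a b]

lemma mem_tauSpan_self (g : G → ℂ) : g ∈ tauSpan g :=
  Submodule.subset_span ⟨0, transOp_zero g⟩

lemma tauSpan_map_le (g : G → ℂ) (a : G) : (tauSpan g).map (transLM a) ≤ tauSpan g := by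
  rw [tauSpan, Submodule.map_span, Submodule.span_le]
  rintro _ ⟨_, ⟨b, rfl⟩, rfl⟩
  exact Submodule.subset_span ⟨b + a, (transOp_transOp a b g).symm⟩

lemma fwdDiffOp_eq (a : G) (u : G → ℂ) : fwdDiffOp a u = transOp a u - u := rfl

lemma fwdDiffOp_comm (a b : G) (u : G → ℂ) :
    fwdDiffOp a (fwdDiffOp b u) = fwdDiffOp b (fwdDiffOp a u) := by
  funext x
  simp only [fwdDiffOp]
  rw [add_right_comm x b a]
  ring

lemma mixedDiff_fwdDiffOp (l : List G) (a : G) (u : G → ℂ) :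
    mixedDiff l (fwdDiffOp a u) = fwdDiffOp a (mixedDiff l u) := by
  induction l with
  | nil => rfl
  | cons b t ih =>
      show fwdDiffOp b (mixedDiff t (fwdDiffOp a u)) = _
      rw [ih, fwdDiffOp_comm]
      rfl

lemma fwdDiffOp_mem {N : Submodule ℂ (G → ℂ)} (hNinv : ∀ a : G, N.map (transLM a) ≤ N)
    {u : G → ℂ} (hu : u ∈ N) (a : G) : fwdDiffOp a u ∈ N := by
  rw [fwdDiffOp_eq]
  exact sub_mem (hNinv a ⟨u, hu, rfl⟩) hu

variable [TopologicalSpace G] [IsTopologicalAddGroup G]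

/-- Key density lemma: if all differences of `f` with steps in a topologically generating
set `E` lie in a finite-dimensional translation-invariant subspace `W`, then the span of
translates of `f` is finite dimensional. -/
lemma lemB (f : G → ℂ) (hcont : Continuous f) (W : Submodule ℂ (G → ℂ))
    (hWfd : FiniteDimensional ℂ W) (hWinv : ∀ a : G, W.map (transLM a) ≤ W)
    (E : Set G) (hE : ∀ e ∈ E, fwdDiffOp e f ∈ W)
    (hdense : closure ((AddSubgroup.closure E : AddSubgroup G) : Set G) = Set.univ) :
    FiniteDimensional ℂ (tauSpan f) := by
  haveI := hWfd
  -- the set of steps whose difference lands in `W` is a subgroup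
  let S : AddSubgroup G :=
    { carrier := {a : G | fwdDiffOp a f ∈ W}
      zero_mem' := by
        have h0 : fwdDiffOp (0 : G) f = 0 := by funext x; simp [fwdDiffOp]
        simp only [Set.mem_setOf_eq, h0]
        exact W.zero_mem
      add_mem' := by
        intro a b ha hb
        have hab : fwdDiffOp (a + b) f = fwdDiffOp a f + transOp a (fwdDiffOp b f) := by
          funext x
          simp only [fwdDiffOp, transOp, Pi.add_apply]
          rw [← add_assoc]
          ring
        simp only [Set.mem_setOf_eq] at *
        rw [hab]
        exact add_mem ha (hWinv a ⟨_, hb, rfl⟩)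
      neg_mem' := by
        intro a ha
        have hna : fwdDiffOp (-a) f = -transOp (-a) (fwdDiffOp a f) := by
          funext x
          simp only [fwdDiffOp, transOp, Pi.neg_apply]
          rw [neg_add_cancel_right]
          ring
        simp only [Set.mem_setOf_eq] at *
        rw [hna]
        exact neg_mem (hWinv (-a) ⟨_, ha, rfl⟩) }
  -- it is closed
  have hφ : Continuous fun a : G => fwdDiffOp a f :=
    continuous_pi fun x => (hcont.comp (continuous_add_left x)).sub continuous_const
  have hSclosed : IsClosed (S : Set G) := by
    have hrw : (S : Set G) = (fun a : G => fwdDiffOp a f) ⁻¹' (W : Set (G → ℂ)) := rfl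
    rw [hrw]
    exact W.closed_of_finiteDimensional.preimage hφ
  -- it contains everything
  have hall : ∀ a : G, fwdDiffOp a f ∈ W := by
    intro a
    have h1 : AddSubgroup.closure E ≤ S := (AddSubgroup.closure_le S).mpr hE
    have h2 : closure ((AddSubgroup.closure E : AddSubgroup G) : Set G) ⊆ (S : Set G) :=
      closure_minimal h1 hSclosed
    exact h2 (by rw [hdense]; trivial)
  -- conclude
  have hle : tauSpan f ≤ Submodule.span ℂ {f} ⊔ W := by
    rw [tauSpan, Submodule.span_le]
    rintro _ ⟨b, rfl⟩
    have hb : transOp b f = f + fwdDiffOp b f := by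
      funext x; simp [transOp, fwdDiffOp]
    refine SetLike.mem_coe.mpr ?_
    show transOp b f ∈ _
    rw [hb]
    exact add_mem (Submodule.mem_sup_left (Submodule.mem_span_singleton_self f))
      (Submodule.mem_sup_right (hall b))
  exact Submodule.finiteDimensional_of_le hle

/-- Main induction: mixed differences along the lists `cols k` of `f` lie in a
finite-dimensional invariant subspace, and every selection of one step per column
topologically generates `G`. -/
lemma aux : ∀ (m : ℕ) {s : ℕ} (cols : Fin s → List G),
    (∑ k, (cols k).length) ≤ m →
    ∀ N : Submodule ℂ (G → ℂ), FiniteDimensional ℂ N →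
    (∀ a : G, N.map (transLM a) ≤ N) →
    ∀ f : G → ℂ, Continuous f →
    (∀ k, mixedDiff (cols k) f ∈ N) →
    (∀ sel : Fin s → G, (∀ k, sel k ∈ cols k) →
      closure ((AddSubgroup.closure (Set.range sel) : AddSubgroup G) : Set G) = Set.univ) →
    FiniteDimensional ℂ (tauSpan f) := by
  intro m
  induction m using Nat.strong_induction_on with
  | _ m ih =>
    intro s cols hsum N hNfd hNinv f hcont hfN hsel
    haveI := hNfd
    by_cases hk : ∃ k, cols k = []
    · -- some column is empty: f itself is in N
      obtain ⟨k, hk⟩ := hk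
      have hfmem : f ∈ N := by have := hfN k; rwa [hk] at this
      have hle : tauSpan f ≤ N := by
        rw [tauSpan, Submodule.span_le]
        rintro _ ⟨b, rfl⟩
        exact hNinv b ⟨f, hfmem, rfl⟩
      exact Submodule.finiteDimensional_of_le hle
    · push_neg at hk
      -- all columns nonempty; peel off the heads
      set a : Fin s → G := fun k => (cols k).head (hk k) with ha
      set g : Fin s → G → ℂ := fun k => fwdDiffOp (a k) f with hg
      have hWk : ∀ k, FiniteDimensional ℂ (tauSpan (g k)) := by
        intro k
        set cols' : Fin s → List G := Function.update cols k (cols k).tail with hcols'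
        -- the total length drops
        have hlen : (∑ k', (cols' k').length) < ∑ k', (cols k').length := by
          have hrw : ∀ j, (cols' j).length =
              Function.update (fun j => (cols j).length) k (cols k).tail.length j :=
            fun j => Function.apply_update (fun _ l => l.length) cols k (cols k).tail j
          have hself : (fun j => (cols j).length) =
              Function.update (fun j => (cols j).length) k ((cols k).length) := by
            funext j
            by_cases hkj : j = k <;> simp [hkj]
          calc (∑ k', (cols' k').length)
              = ∑ j, Function.update (fun j => (cols j).length) k (cols k).tail.length j :=
                Finset.sum_congr rfl fun j _ => hrw j
            _ = (cols k).tail.length + ∑ j ∈ Finset.univ.erase k, (cols j).length := by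
                rw [Finset.sum_update_of_mem (Finset.mem_univ k)]
                congr 1
                exact Finset.sum_congr (by ext j; simp [Finset.mem_sdiff, Finset.mem_erase,
                  and_comm]) fun j _ => rfl
            _ < (cols k).length + ∑ j ∈ Finset.univ.erase k, (cols j).length := by
                have hpos : 0 < (cols k).length := List.length_pos_iff.mpr (hk k)
                have : (cols k).tail.length = (cols k).length - 1 := List.length_tail
                omega
            _ = ∑ k', (cols k').length := Finset.add_sum_erase Finset.univ (fun j => (cols j).length) (Finset.mem_univ k)
        -- the reduced system still satisfies the hypotheses, for `g k`
        apply ih (∑ k', (cols' k').length) (lt_of_lt_of_le hlen hsum) cols' le_rfl N hNfd hNinv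
          (g k) (by
            have : Continuous fun x : G => f (x + a k) :=
              hcont.comp (continuous_add_right (a k))
            exact this.sub hcont)
        · -- mixed difference conditions
          intro k'
          by_cases hkk : k' = k
          · subst hkk
            have hupd : cols' k' = (cols k').tail := Function.update_self _ _ _
            rw [hupd, hg]
            rw [mixedDiff_fwdDiffOp]
            have hht : fwdDiffOp (a k') (mixedDiff (cols k').tail f)
                = mixedDiff (cols k') f := by
              conv_rhs => rw [← List.cons_head_tail (hk k')]
              rfl
            rw [hht]
            exact hfN k'
          · have hupd : cols' k' = cols k' := Function.update_of_ne hkk _ _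
            rw [hupd, hg, mixedDiff_fwdDiffOp]
            exact fwdDiffOp_mem hNinv (hfN k') (a k)
        · -- selections from the reduced lists are selections from the original ones
          intro sel hselmem
          apply hsel
          intro k'
          by_cases hkk : k' = k
          · subst hkk
            have hupd : cols' k' = (cols k').tail := Function.update_self _ _ _
            have := hselmem k'
            rw [hupd] at this
            exact List.mem_of_mem_tail this
          · have hupd : cols' k' = cols k' := Function.update_of_ne hkk _ _
            have := hselmem k'
            rwa [hupd] at this
      -- assemble the finite-dimensional invariant space W
      haveI : ∀ k, FiniteDimensional ℂ (tauSpan (g k)) := hWk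
      set W : Submodule ℂ (G → ℂ) := N ⊔ ⨆ k, tauSpan (g k) with hW
      haveI : FiniteDimensional ℂ W := by
        apply Submodule.finiteDimensional_sup
      have hWinv : ∀ b : G, W.map (transLM b) ≤ W := by
        intro b
        rw [hW, Submodule.map_sup, Submodule.map_iSup]
        apply sup_le_sup (hNinv b)
        exact iSup_mono fun k => tauSpan_map_le (g k) b
      apply lemB f hcont W ‹_› hWinv (Set.range a)
      · rintro _ ⟨k, rfl⟩
        have h1 : g k ∈ tauSpan (g k) := mem_tauSpan_self _
        have h2 : tauSpan (g k) ≤ W :=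
          le_trans (le_iSup (fun k => tauSpan (g k)) k) le_sup_right
        exact h2 h1
      · exact hsel a fun k => List.head_mem (hk k)

end MontelAux

theorem montel_mixed_topological {G : Type*} [AddCommGroup G] [TopologicalSpace G]
    [IsTopologicalAddGroup G] {n s : ℕ} (hn : 1 ≤ n) (hs : 1 ≤ s)
    (h : Fin n → Fin s → G)
    (hgen : ∀ idx : Fin s → Fin n,
      closure ((AddSubgroup.closure (Set.range fun j : Fin s => h (idx j) j) :
        AddSubgroup G) : Set G) = Set.univ)
    (f : G → ℂ) (hcont : Continuous f) (P : Fin s → G → ℂ)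
    (hP : ∀ k : Fin s, IsExpPoly (P k))
    (hf : ∀ k : Fin s, mixedDiff (List.ofFn fun i : Fin n => h i k).reverse f = P k) :
    IsExpPoly f := by
  classical
  set cols : Fin s → List G := fun k => (List.ofFn fun i : Fin n => h i k).reverse with hcols
  haveI : ∀ k, FiniteDimensional ℂ (tauSpan (P k)) := hP
  set N : Submodule ℂ (G → ℂ) := ⨆ k, tauSpan (P k) with hN
  haveI hNfd : FiniteDimensional ℂ N := by
    rw [hN]; infer_instance
  have hNinv : ∀ b : G, N.map (MontelAux.transLM b) ≤ N := by
    intro b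
    rw [hN, Submodule.map_iSup]
    exact iSup_mono fun k => MontelAux.tauSpan_map_le (P k) b
  have hfN : ∀ k, mixedDiff (cols k) f ∈ N := by
    intro k
    rw [hcols, hf k]
    exact le_iSup (fun k => tauSpan (P k)) k (MontelAux.mem_tauSpan_self (P k))
  have hsel : ∀ sel : Fin s → G, (∀ k, sel k ∈ cols k) →
      closure ((AddSubgroup.closure (Set.range sel) : AddSubgroup G) : Set G) = Set.univ := by
    intro sel hmem
    have hex : ∀ k, ∃ i : Fin n, h i k = sel k := by
      intro k
      have := hmem k
      rw [hcols] at this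
      simp only [List.mem_reverse] at this
      rwa [List.mem_ofFn] at this
    choose idx hidx using hex
    have hrng : sel = fun j : Fin s => h (idx j) j := funext fun j => (hidx j).symm
    rw [hrng]
    exact hgen idx
  exact MontelAux.aux (∑ k, (cols k).length) cols le_rfl N hNfd hNinv f hcont hfN hsel
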